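/- Let (a, [·,·]_a) and (h, [·,·]_h) be Lie super algebras, Θ : a → Der(h) an even linear map, and Λ : a × a → h an even super skew-symmetric bilinear map such that (1) [Θ(x),Θ(y)] - Θ([x,y]_a) = ad_h(Λ(x,y)) and (2) the cyclic sum over (x,y,z) of (-1)^{|x||z|}(Θ(x)(Λ(y,z)) + Λ(x,[y,z]_a)) vanishes. Then the bracket on g = a ⊕ h given by [x+u, y+v] = [x,y]_a + Θ(x)(v) - (-1)^{|x||y|}Θ(y)(u) + Λ(x,y) + [u,v]_h (for homogeneous x+u, y+v with |x|=|u|, |y|=|v|) defines a Lie super algebra structure on g (the generalized semi-direct product). -/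
import Mathlib


/-- The sign `(-1)^{ij}` for `i j : ZMod 2`. -/
def sgn (F : Type*) [Field F] (i j : ZMod 2) : F := (-1) ^ (i * j).val

lemma zmod2cases (i : ZMod 2) : i = 0 ∨ i = 1 := by revert i; decide

lemma sgn_zero_left (F : Type*) [Field F] (j : ZMod 2) : sgn F 0 j = 1 := by
  simp [sgn]

lemma sgn_zero_right (F : Type*) [Field F] (i : ZMod 2) : sgn F i 0 = 1 := by
  simp [sgn]

lemma sgn_one_one (F : Type*) [Field F] : sgn F 1 1 = -1 := by
  norm_num [sgn, show ((1:ZMod 2)).val = 1 from rfl]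

lemma sgn_comm (F : Type*) [Field F] (i j : ZMod 2) : sgn F i j = sgn F j i := by
  rw [sgn, sgn, mul_comm]

lemma sgn_mul_self (F : Type*) [Field F] (i j : ZMod 2) : sgn F i j * sgn F i j = 1 := by
  rcases zmod2cases i with h | h <;> rcases zmod2cases j with h' | h' <;>
    subst h <;> subst h' <;>
    norm_num [sgn, show ((1:ZMod 2)).val = 1 from rfl, show ((2:ZMod 2)).val = 0 from rfl]

lemma sgn_add_right (F : Type*) [Field F] (i j k : ZMod 2) :
    sgn F i (j + k) = sgn F i j * sgn F i k := by
  rcases zmod2cases i with h | h <;> rcases zmod2cases j with h' | h' <;>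
    rcases zmod2cases k with h'' | h'' <;> subst h <;> subst h' <;> subst h'' <;>
    norm_num [sgn, show ((1:ZMod 2)).val = 1 from rfl, show ((2:ZMod 2)).val = 0 from rfl]

lemma sgn_add_left (F : Type*) [Field F] (i j k : ZMod 2) :
    sgn F (i + j) k = sgn F i k * sgn F j k := by
  rw [sgn_comm, sgn_add_right, sgn_comm F k i, sgn_comm F k j]

set_option maxHeartbeats 2000000 in
theorem generalized_semidirect_product (F A H : Type*) [Field F]
    [AddCommGroup A] [Module F A] [AddCommGroup H] [Module F H]
    (gA : ZMod 2 → Submodule F A) (gH : ZMod 2 → Submodule F H)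
    (hgA : DirectSum.IsInternal gA) (hgH : DirectSum.IsInternal gH)
    (brA : A →ₗ[F] A →ₗ[F] A) (brH : H →ₗ[F] H →ₗ[F] H)
    (hbrA_even : ∀ i j : ZMod 2, ∀ x y : A, x ∈ gA i → y ∈ gA j → brA x y ∈ gA (i + j))
    (hbrA_skew : ∀ i j : ZMod 2, ∀ x y : A, x ∈ gA i → y ∈ gA j →
      brA x y = -(sgn F i j) • brA y x)
    (hbrA_jac : ∀ i j k : ZMod 2, ∀ x y z : A, x ∈ gA i → y ∈ gA j → z ∈ gA k →
      sgn F i k • brA x (brA y z) + sgn F j i • brA y (brA z x)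
        + sgn F k j • brA z (brA x y) = 0)
    (hbrH_even : ∀ i j : ZMod 2, ∀ u v : H, u ∈ gH i → v ∈ gH j → brH u v ∈ gH (i + j))
    (hbrH_skew : ∀ i j : ZMod 2, ∀ u v : H, u ∈ gH i → v ∈ gH j →
      brH u v = -(sgn F i j) • brH v u)
    (hbrH_jac : ∀ i j k : ZMod 2, ∀ u v w : H, u ∈ gH i → v ∈ gH j → w ∈ gH k →
      sgn F i k • brH u (brH v w) + sgn F j i • brH v (brH w u)
        + sgn F k j • brH w (brH u v) = 0)
    (Θ : A →ₗ[F] H →ₗ[F] H)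
    (hΘ_even : ∀ i j : ZMod 2, ∀ x : A, ∀ u : H, x ∈ gA i → u ∈ gH j →
      Θ x u ∈ gH (i + j))
    (hΘ_der : ∀ i j : ZMod 2, ∀ x : A, ∀ u v : H, x ∈ gA i → u ∈ gH j →
      Θ x (brH u v) = brH (Θ x u) v + sgn F i j • brH u (Θ x v))
    (Λ : A →ₗ[F] A →ₗ[F] H)
    (hΛ_even : ∀ i j : ZMod 2, ∀ x y : A, x ∈ gA i → y ∈ gA j → Λ x y ∈ gH (i + j))
    (hΛ_skew : ∀ i j : ZMod 2, ∀ x y : A, x ∈ gA i → y ∈ gA j →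
      Λ x y = -(sgn F i j) • Λ y x)
    (hcond1 : ∀ i j : ZMod 2, ∀ x y : A, ∀ u : H, x ∈ gA i → y ∈ gA j →
      Θ x (Θ y u) - sgn F i j • Θ y (Θ x u) - Θ (brA x y) u = brH (Λ x y) u)
    (hcond2 : ∀ i j k : ZMod 2, ∀ x y z : A, x ∈ gA i → y ∈ gA j → z ∈ gA k →
      sgn F i k • (Θ x (Λ y z) + Λ x (brA y z))
        + sgn F j i • (Θ y (Λ z x) + Λ y (brA z x))
        + sgn F k j • (Θ z (Λ x y) + Λ z (brA x y)) = 0) :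
    ∃ Br : (A × H) →ₗ[F] (A × H) →ₗ[F] (A × H),
      (∀ i j : ZMod 2, ∀ x y : A, ∀ u v : H,
        x ∈ gA i → u ∈ gH i → y ∈ gA j → v ∈ gH j →
        Br (x, u) (y, v)
          = (brA x y, Θ x v - sgn F i j • Θ y u + Λ x y + brH u v)) ∧
      (∀ i j : ZMod 2, ∀ p q : A × H,
        p ∈ (gA i).prod (gH i) → q ∈ (gA j).prod (gH j) →
        Br p q ∈ (gA (i + j)).prod (gH (i + j))) ∧
      (∀ i j : ZMod 2, ∀ p q : A × H,
        p ∈ (gA i).prod (gH i) → q ∈ (gA j).prod (gH j) →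
        Br p q = -(sgn F i j) • Br q p) ∧
      (∀ i j k : ZMod 2, ∀ p q r : A × H,
        p ∈ (gA i).prod (gH i) → q ∈ (gA j).prod (gH j) → r ∈ (gA k).prod (gH k) →
        sgn F i k • Br p (Br q r) + sgn F j i • Br q (Br r p)
          + sgn F k j • Br r (Br p q) = 0) := by
  classical
  -- the degree-1 projections
  set πA : A →ₗ[F] A :=
    (gA 1).subtype ∘ₗ (DirectSum.component F (ZMod 2) (fun i => gA i) 1) ∘ₗ
      (LinearEquiv.ofBijective (DirectSum.coeLinearMap gA) hgA).symm.toLinearMap with hπAdef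
  set πH : H →ₗ[F] H :=
    (gH 1).subtype ∘ₗ (DirectSum.component F (ZMod 2) (fun i => gH i) 1) ∘ₗ
      (LinearEquiv.ofBijective (DirectSum.coeLinearMap gH) hgH).symm.toLinearMap with hπHdef
  have hπA_mem : ∀ (i : ZMod 2) (x : A), x ∈ gA i → πA x = if i = 1 then x else 0 := by
    intro i x hx
    have hrfl : πA x
        = ((LinearEquiv.ofBijective (DirectSum.coeLinearMap gA) hgA).symm x 1 : A) := rfl
    by_cases h : i = 1
    · subst h; rw [hrfl, hgA.ofBijective_coeLinearMap_of_mem hx, if_pos rfl]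
    · rw [hrfl, hgA.ofBijective_coeLinearMap_of_mem_ne h hx, if_neg h, Submodule.coe_zero]
  have hπH_mem : ∀ (i : ZMod 2) (u : H), u ∈ gH i → πH u = if i = 1 then u else 0 := by
    intro i u hu
    have hrfl : πH u
        = ((LinearEquiv.ofBijective (DirectSum.coeLinearMap gH) hgH).symm u 1 : H) := rfl
    by_cases h : i = 1
    · subst h; rw [hrfl, hgH.ofBijective_coeLinearMap_of_mem hu, if_pos rfl]
    · rw [hrfl, hgH.ofBijective_coeLinearMap_of_mem_ne h hu, if_neg h, Submodule.coe_zero]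
  -- the bilinear "signed" action
  set S : A →ₗ[F] H →ₗ[F] H := Θ - (2 : F) • ((Θ ∘ₗ πA).compl₂ πH) with hSdef
  have hS : ∀ (i j : ZMod 2) (x : A) (u : H), x ∈ gA j → u ∈ gH i →
      S x u = sgn F i j • Θ x u := by
    intro i j x u hx hu
    have h0 : S x u = Θ x u - (2 : F) • Θ (πA x) (πH u) := by
      simp [hSdef]
    rw [h0, hπA_mem j x hx, hπH_mem i u hu]
    rcases zmod2cases i with hi | hi <;> rcases zmod2cases j with hj | hj <;>
      subst hi <;> subst hj <;>
      simp [sgn_zero_left, sgn_zero_right, sgn_one_one] <;> module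
  set Br : (A × H) →ₗ[F] (A × H) →ₗ[F] (A × H) := LinearMap.mk₂ F
    (fun p q => (brA p.1 q.1, Θ p.1 q.2 - S q.1 p.2 + Λ p.1 q.1 + brH p.2 q.2))
    (by intro p p' q; simp [Prod.ext_iff]; module)
    (by intro c p q; simp [Prod.ext_iff, Prod.smul_def]; module)
    (by intro p q q'; simp [Prod.ext_iff]; module)
    (by intro c p q; simp [Prod.ext_iff, Prod.smul_def]; module)
    with hBrdef
  have hfor : ∀ (i j : ZMod 2) (x y : A) (u v : H),
      x ∈ gA i → u ∈ gH i → y ∈ gA j → v ∈ gH j →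
      Br (x, u) (y, v) = (brA x y, Θ x v - sgn F i j • Θ y u + Λ x y + brH u v) := by
    intro i j x y u v hx hu hy hv
    have h0 : Br (x, u) (y, v) = (brA x y, Θ x v - S y u + Λ x y + brH u v) := rfl
    rw [h0, hS i j y u hy hu]
  refine ⟨Br, hfor, ?_, ?_, ?_⟩
  · -- membership
    rintro i j ⟨x, u⟩ ⟨y, v⟩ hp hq
    obtain ⟨hx, hu⟩ := hp
    obtain ⟨hy, hv⟩ := hq
    rw [hfor i j x y u v hx hu hy hv]
    refine ⟨hbrA_even i j x y hx hy, ?_⟩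
    have h1 : Θ y u ∈ gH (i + j) := by
      have := hΘ_even j i y u hy hu; rwa [add_comm] at this
    exact Submodule.add_mem _
      (Submodule.add_mem _
        (Submodule.sub_mem _ (hΘ_even i j x v hx hv) (Submodule.smul_mem _ _ h1))
        (hΛ_even i j x y hx hy))
      (hbrH_even i j u v hu hv)
  · -- skew-symmetry
    rintro i j ⟨x, u⟩ ⟨y, v⟩ hp hq
    obtain ⟨hx, hu⟩ := hp
    obtain ⟨hy, hv⟩ := hq
    rw [hfor i j x y u v hx hu hy hv, hfor j i y x v u hy hv hx hu, sgn_comm F j i]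
    have ha := sgn_mul_self F i j
    have hΛs := hΛ_skew i j x y hx hy
    have hHs := hbrH_skew i j u v hu hv
    refine Prod.ext ?_ ?_
    · simpa using hbrA_skew i j x y hx hy
    · show Θ x v - sgn F i j • Θ y u + Λ x y + brH u v
        = -(sgn F i j) • (Θ y u - sgn F i j • Θ x v + Λ y x + brH v u)
      linear_combination (norm := module) hΛs + hHs - ha • Θ x v
  · -- Jacobi identity
    rintro i j k ⟨x, u⟩ ⟨y, v⟩ ⟨z, w⟩ hp hq hr
    obtain ⟨hx, hu⟩ := hp
    obtain ⟨hy, hv⟩ := hq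
    obtain ⟨hz, hw⟩ := hr
    have hW1 : Θ y w - sgn F j k • Θ z v + Λ y z + brH v w ∈ gH (j + k) := by
      have h1 : Θ z v ∈ gH (j + k) := by
        have := hΘ_even k j z v hz hv; rwa [add_comm] at this
      exact Submodule.add_mem _
        (Submodule.add_mem _
          (Submodule.sub_mem _ (hΘ_even j k y w hy hw) (Submodule.smul_mem _ _ h1))
          (hΛ_even j k y z hy hz))
        (hbrH_even j k v w hv hw)
    have hW2 : Θ z u - sgn F k i • Θ x w + Λ z x + brH w u ∈ gH (k + i) := by
      have h1 : Θ x w ∈ gH (k + i) := by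
        have := hΘ_even i k x w hx hw; rwa [add_comm] at this
      exact Submodule.add_mem _
        (Submodule.add_mem _
          (Submodule.sub_mem _ (hΘ_even k i z u hz hu) (Submodule.smul_mem _ _ h1))
          (hΛ_even k i z x hz hx))
        (hbrH_even k i w u hw hu)
    have hW3 : Θ x v - sgn F i j • Θ y u + Λ x y + brH u v ∈ gH (i + j) := by
      have h1 : Θ y u ∈ gH (i + j) := by
        have := hΘ_even j i y u hy hu; rwa [add_comm] at this
      exact Submodule.add_mem _
        (Submodule.add_mem _
          (Submodule.sub_mem _ (hΘ_even i j x v hx hv) (Submodule.smul_mem _ _ h1))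
          (hΛ_even i j x y hx hy))
        (hbrH_even i j u v hu hv)
    rw [hfor j k y z v w hy hv hz hw, hfor k i z x w u hz hw hx hu,
      hfor i j x y u v hx hu hy hv,
      hfor i (j + k) x (brA y z) u _ hx hu (hbrA_even j k y z hy hz) hW1,
      hfor j (k + i) y (brA z x) v _ hy hv (hbrA_even k i z x hz hx) hW2,
      hfor k (i + j) z (brA x y) w _ hz hw (hbrA_even i j x y hx hy) hW3]
    -- normalize signs
    simp only [sgn_add_right]
    rw [sgn_comm F j i, sgn_comm F k j, sgn_comm F k i]
    have ha := sgn_mul_self F i j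
    have hb := sgn_mul_self F j k
    have hc := sgn_mul_self F i k
    have H1 := hcond1 i j x y w hx hy
    have H2 := hcond1 j k y z u hy hz
    have H3 : Θ z (Θ x v) - sgn F i k • Θ x (Θ z v) - Θ (brA z x) v = brH (Λ z x) v := by
      have := hcond1 k i z x v hz hx; rwa [sgn_comm F k i] at this
    have C2 := hcond2 i j k x y z hx hy hz
    have JH := hbrH_jac i j k u v w hu hv hw
    have D1 := hΘ_der i j x v w hx hv
    have D2 := hΘ_der j k y w u hy hw
    have D3 := hΘ_der k i z u v hz hu
    have S1 : brH (Λ x y) w = -(sgn F i k * sgn F j k) • brH w (Λ x y) := by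
      have := hbrH_skew (i + j) k (Λ x y) w (hΛ_even i j x y hx hy) hw
      rwa [sgn_add_left] at this
    have S2 : brH (Λ y z) u = -(sgn F i j * sgn F i k) • brH u (Λ y z) := by
      have := hbrH_skew (j + k) i (Λ y z) u (hΛ_even j k y z hy hz) hu
      rwa [sgn_add_left, sgn_comm F j i, sgn_comm F k i] at this
    have S3 : brH (Λ z x) v = -(sgn F j k * sgn F i j) • brH v (Λ z x) := by
      have := hbrH_skew (k + i) j (Λ z x) v (hΛ_even k i z x hz hx) hv
      rwa [sgn_add_left, sgn_comm F k j] at this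
    have S4 : brH (Θ x v) w = -(sgn F i k * sgn F j k) • brH w (Θ x v) := by
      have := hbrH_skew (i + j) k (Θ x v) w (hΘ_even i j x v hx hv) hw
      rwa [sgn_add_left] at this
    have S5 : brH (Θ y w) u = -(sgn F i j * sgn F i k) • brH u (Θ y w) := by
      have := hbrH_skew (j + k) i (Θ y w) u (hΘ_even j k y w hy hw) hu
      rwa [sgn_add_left, sgn_comm F j i, sgn_comm F k i] at this
    have S6 : brH (Θ z u) v = -(sgn F j k * sgn F i j) • brH v (Θ z u) := by
      have := hbrH_skew (k + i) j (Θ z u) v (hΘ_even k i z u hz hu) hv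
      rwa [sgn_add_left, sgn_comm F k j] at this
    have HA := hbrA_jac i j k x y z hx hy hz
    rw [sgn_comm F j i, sgn_comm F k j] at C2 JH
    rw [sgn_comm F k i] at D3
    refine Prod.ext ?_ ?_
    · rw [sgn_comm F j i, sgn_comm F k j] at HA
      simpa using HA
    · show sgn F i k • (Θ x (Θ y w - sgn F j k • Θ z v + Λ y z + brH v w)
          - (sgn F i j * sgn F i k) • Θ (brA y z) u + Λ x (brA y z)
          + brH u (Θ y w - sgn F j k • Θ z v + Λ y z + brH v w))
        + sgn F i j • (Θ y (Θ z u - sgn F i k • Θ x w + Λ z x + brH w u)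
          - (sgn F j k * sgn F i j) • Θ (brA z x) v + Λ y (brA z x)
          + brH v (Θ z u - sgn F i k • Θ x w + Λ z x + brH w u))
        + sgn F j k • (Θ z (Θ x v - sgn F i j • Θ y u + Λ x y + brH u v)
          - (sgn F i k * sgn F j k) • Θ (brA x y) w + Λ z (brA x y)
          + brH w (Θ x v - sgn F i j • Θ y u + Λ x y + brH u v)) = 0
      simp only [map_add, map_sub, map_smul]
      linear_combination (norm := module)
        sgn F i k • H1 + sgn F i j • H2 + sgn F j k • H3 + C2 + JH
        + sgn F i k • D1 + sgn F i j • D2 + sgn F j k • D3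
        + sgn F i k • S1 + sgn F i j • S2 + sgn F j k • S3
        + sgn F i k • S4 + sgn F i j • S5 + sgn F j k • S6
        - ha • (sgn F j k • Θ (brA z x) v + sgn F i k • brH u (Λ y z)
            + sgn F i k • brH u (Θ y w))
        - hb • (sgn F i k • Θ (brA x y) w + sgn F i j • brH v (Λ z x)
            + sgn F i j • brH v (Θ z u))
        - hc • (sgn F i j • Θ (brA y z) u + sgn F j k • brH w (Λ x y)
            + sgn F j k • brH w (Θ x v))
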